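/- Let C = r_K·γ₀/(1 − e^{−r_K·τ}) with r_K, τ > 0, γ₀ ∈ (0,1), and N = ν_L·r·b/((ν_L + μ_L)·μ_v). If N ≤ (1 + (μ_v/ν_L)·e^{−r_Kτ}·C)·(1 + e^{−r_Kτ}·C/(ν_L + μ_L)), then the matrix −A_up = [[ν_L + μ_L + C·e^{−r_Kτ}, −r·b·ν_L/μ_v], [−ν_L, ν_L·(1 + (μ_v/ν_L)·C·e^{−r_Kτ})]] has all principal minors nonnegative (both diagonal entries positive and determinant ≥ 0). -/

import Mathlib

/-- Extinction condition: if
`N ≤ (1 + (μ_v/ν_L) e^{-r_K τ} C)(1 + e^{-r_K τ} C/(ν_L+μ_L))` with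
`C = r_K γ₀/(1-e^{-r_K τ})`, then all principal minors of `-A_up` are nonnegative:
both diagonal entries are positive and the determinant is nonnegative, where
`-A_up = [[ν_L+μ_L+C e^{-r_Kτ}, -r b ν_L/μ_v], [-ν_L, ν_L(1+(μ_v/ν_L) C e^{-r_Kτ})]]`. -/
theorem extinction_condition_minors_nonneg
    (r b νL μL μv rK τ γ0 : ℝ)
    (hr : 0 < r) (hb : 0 < b) (hνL : 0 < νL) (hμL : 0 < μL) (hμv : 0 < μv)
    (hrK : 0 < rK) (hτ : 0 < τ) (hγ0 : 0 < γ0) (hγ1 : γ0 < 1) :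
    let C : ℝ := rK * γ0 / (1 - Real.exp (-rK * τ))
    let N : ℝ := νL * r * b / ((νL + μL) * μv)
    N ≤ (1 + (μv / νL) * Real.exp (-rK * τ) * C) *
        (1 + Real.exp (-rK * τ) * C / (νL + μL)) →
    0 < νL + μL + C * Real.exp (-rK * τ) ∧
    0 < νL * (1 + (μv / νL) * C * Real.exp (-rK * τ)) ∧
    0 ≤ (νL + μL + C * Real.exp (-rK * τ)) *
          (νL * (1 + (μv / νL) * C * Real.exp (-rK * τ)))
        - (-(r * b * νL / μv)) * (-νL) := by
  intro C N h
  have hE : Real.exp (-rK * τ) < 1 := by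
    rw [Real.exp_lt_one_iff]; nlinarith
  have hE0 : 0 < Real.exp (-rK * τ) := Real.exp_pos _
  have hC : 0 < C := div_pos (by positivity) (by linarith)
  have hsum : 0 < νL + μL := by linarith
  refine ⟨by positivity, by positivity, ?_⟩
  set E := Real.exp (-rK * τ) with hEdef
  have h' : νL * (νL * r * b) / μv ≤
      (νL + μv * (E * C)) * (νL + μL + E * C) := by
    have h2 := mul_le_mul_of_nonneg_left h (le_of_lt (mul_pos hsum hνL))
    have e1 : (νL + μL) * νL * (νL * r * b / ((νL + μL) * μv)) = νL * (νL * r * b) / μv := by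
      field_simp
    have e2 : (νL + μL) * νL * ((1 + μv / νL * E * C) * (1 + E * C / (νL + μL)))
        = (νL + μv * (E * C)) * (νL + μL + E * C) := by
      field_simp
    rw [show N = νL * r * b / ((νL + μL) * μv) from rfl] at h2
    rw [e1, e2] at h2
    exact h2
  have key : -(r * b * νL / μv) * -νL = νL * (νL * r * b) / μv := by ring
  have e3 : νL * (1 + μv / νL * C * E) = νL + μv * (E * C) := by
    field_simp
  rw [key, e3]
  nlinarith [h']
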